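/- Let p, p', v ∈ ℝ^m with p ≠ p' and p ≠ v, and suppose ⟨p' − p, v − p⟩ ≤ 0 (v is a strict pivot relative to p at p'). If p'' is the point of the closed segment [p', v] closest to p, then d(p, p'')² ≤ d(p, p')² · d(p, v)² / (d(p, p')² + d(p, v)²). -/

import Mathlib

open RealInnerProductSpace

/-- Progress with a strict pivot: if `⟨p' - p, v - p⟩ ≤ 0` and `p''` is the point
of `[p', v]` closest to `p`, then
`d(p, p'')² ≤ d(p, p')² d(p, v)² / (d(p, p')² + d(p, v)²)`. -/
theorem strict_pivot_step_progress {m : ℕ} (p p' v p'' : EuclideanSpace ℝ (Fin m))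
    (hpp' : p ≠ p') (hpv : p ≠ v) (hstrict : ⟪p' - p, v - p⟫ ≤ (0 : ℝ))
    (hmem : p'' ∈ segment ℝ p' v)
    (hmin : ∀ x ∈ segment ℝ p' v, dist p p'' ≤ dist p x) :
    dist p p'' ^ 2 ≤ dist p p' ^ 2 * dist p v ^ 2 / (dist p p' ^ 2 + dist p v ^ 2) := by
  set a : ℝ := dist p p' ^ 2 with ha
  set b : ℝ := dist p v ^ 2 with hb
  have ha0 : 0 < a := by
    have := dist_pos.mpr hpp'
    positivity
  have hb0 : 0 < b := by
    have := dist_pos.mpr hpv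
    positivity
  have hab : 0 < a + b := by linarith
  set s : ℝ := b / (a + b) with hs
  set t : ℝ := a / (a + b) with ht
  have hs0 : 0 ≤ s := by positivity
  have ht0 : 0 ≤ t := by positivity
  have hst : s + t = 1 := by rw [hs, ht, ← add_div, add_comm b a, div_self hab.ne']
  set x : EuclideanSpace ℝ (Fin m) := s • p' + t • v with hx
  have hxmem : x ∈ segment ℝ p' v := ⟨s, t, hs0, ht0, hst, rfl⟩
  have hd : dist p p'' ≤ dist p x := hmin x hxmem
  have hpx : p - x = s • (p - p') + t • (p - v) := by
    have h1 : s • (p - p') + t • (p - v) = (s + t) • p - (s • p' + t • v) := by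
      rw [add_smul, smul_sub, smul_sub]; abel
    rw [hx, h1, hst, one_smul]
  have hexp : dist p x ^ 2 =
      s ^ 2 * a + 2 * (s * t * ⟪p - p', p - v⟫) + t ^ 2 * b := by
    rw [dist_eq_norm, hpx, norm_add_sq_real, real_inner_smul_left, real_inner_smul_right,
      norm_smul, norm_smul, Real.norm_eq_abs, Real.norm_eq_abs, abs_of_nonneg hs0,
      abs_of_nonneg ht0, ha, hb, dist_eq_norm, dist_eq_norm]
    ring
  have hinner : ⟪p - p', p - v⟫ ≤ 0 := by
    have h1 : p - p' = -(p' - p) := by abel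
    have h2 : p - v = -(v - p) := by abel
    rw [h1, h2, inner_neg_neg]
    exact hstrict
  have hval : s ^ 2 * a + t ^ 2 * b = a * b / (a + b) := by
    rw [hs, ht]
    field_simp
    ring
  have hdx : dist p x ^ 2 ≤ a * b / (a + b) := by
    rw [hexp]
    nlinarith [mul_nonneg hs0 ht0]
  have h0 : 0 ≤ dist p p'' := dist_nonneg
  nlinarith [hd, hdx]
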